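/- If w ∈ ℝ^3 lies on the energy surface S_p with p ≠ 0 and w ∉ {0, p}, then w·(w−p) < 0; consequently S_p is contained in the closed ball of center p/2 and radius |p|/2. -/

import Mathlib

noncomputable def Edisp (κ1 κ2 : ℝ) (p : EuclideanSpace ℝ (Fin 3)) : ℝ :=
  Real.sqrt (κ1 * ‖p‖ ^ 2 + κ2 * ‖p‖ ^ 4)

lemma key_scalar (κ1 κ2 a b c : ℝ) (hκ1 : 0 < κ1) (hκ2 : 0 < κ2)
    (ha : 0 < a) (hb : 0 < b) (hc : 0 ≤ c)
    (h : Real.sqrt (κ1 * a ^ 2 + κ2 * a ^ 4) + Real.sqrt (κ1 * b ^ 2 + κ2 * b ^ 4)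
      = Real.sqrt (κ1 * c ^ 2 + κ2 * c ^ 4)) :
    a ^ 2 + b ^ 2 < c ^ 2 := by
  set A := κ1 * a ^ 2 + κ2 * a ^ 4 with hA
  set B := κ1 * b ^ 2 + κ2 * b ^ 4 with hB
  set C := κ1 * c ^ 2 + κ2 * c ^ 4 with hCdef
  have hApos : 0 < A := by positivity
  have hBpos : 0 < B := by positivity
  have hCnn : 0 ≤ C := by positivity
  have hsA : Real.sqrt A ^ 2 = A := Real.sq_sqrt hApos.le
  have hsB : Real.sqrt B ^ 2 = B := Real.sq_sqrt hBpos.le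
  have hC : C = (Real.sqrt A + Real.sqrt B) ^ 2 := by
    rw [h, Real.sq_sqrt hCnn]
  have hAB : Real.sqrt A * Real.sqrt B = Real.sqrt (A * B) :=
    (Real.sqrt_mul hApos.le B).symm
  have hlt : κ2 * a ^ 2 * b ^ 2 < Real.sqrt (A * B) := by
    have h1 : (0:ℝ) ≤ κ2 * a ^ 2 * b ^ 2 := by positivity
    rw [Real.lt_sqrt h1]
    have : (κ2 * a ^ 2 * b ^ 2) ^ 2 = (κ2 * a ^ 4) * (κ2 * b ^ 4) := by ring
    rw [this]
    have h2 : κ2 * a ^ 4 < A := by rw [hA]; nlinarith [mul_pos hκ1 (pow_pos ha 2)]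
    have h3 : κ2 * b ^ 4 < B := by rw [hB]; nlinarith [mul_pos hκ1 (pow_pos hb 2)]
    calc κ2 * a ^ 4 * (κ2 * b ^ 4) < A * (κ2 * b ^ 4) := by
          exact mul_lt_mul_of_pos_right h2 (by positivity)
      _ ≤ A * B := by exact mul_le_mul_of_nonneg_left h3.le hApos.le
  by_contra hcon
  push_neg at hcon
  have hCle : C ≤ A + B + 2 * (κ2 * a ^ 2 * b ^ 2) := by
    have hc2 : c ^ 2 ≤ a ^ 2 + b ^ 2 := hcon
    rw [hCdef, hA, hB]
    nlinarith [mul_le_mul hc2 hc2 (sq_nonneg c) (by positivity : (0:ℝ) ≤ a^2+b^2)]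
  have hCgt : A + B + 2 * (κ2 * a ^ 2 * b ^ 2) < C := by
    rw [hC]
    have : (Real.sqrt A + Real.sqrt B) ^ 2
        = A + B + 2 * (Real.sqrt A * Real.sqrt B) := by
      linear_combination hsA + hsB
    rw [this, hAB]
    linarith
  linarith

/-- If `w ∈ S_p` with `p ≠ 0` and `w ∉ {0, p}` then `w·(w−p) < 0`; consequently
`S_p` is contained in the closed ball of center `p/2` and radius `|p|/2`. -/
theorem surface_in_ball (κ1 κ2 : ℝ) (hκ1 : 0 < κ1) (hκ2 : 0 < κ2)
    (p : EuclideanSpace ℝ (Fin 3)) (hp : p ≠ 0) :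
    (∀ w : EuclideanSpace ℝ (Fin 3),
      Edisp κ1 κ2 (p - w) + Edisp κ1 κ2 w = Edisp κ1 κ2 p → w ≠ 0 → w ≠ p →
        (inner ℝ w (w - p) : ℝ) < 0) ∧
    {w : EuclideanSpace ℝ (Fin 3) |
        Edisp κ1 κ2 (p - w) + Edisp κ1 κ2 w = Edisp κ1 κ2 p} ⊆
      Metric.closedBall ((1 / 2 : ℝ) • p) (‖p‖ / 2) := by
  have main : ∀ w : EuclideanSpace ℝ (Fin 3),
      Edisp κ1 κ2 (p - w) + Edisp κ1 κ2 w = Edisp κ1 κ2 p → w ≠ 0 → w ≠ p →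
        (inner ℝ w (w - p) : ℝ) < 0 := by
    intro w h hw0 hwp
    have ha : 0 < ‖p - w‖ := by
      rw [norm_pos_iff, sub_ne_zero]
      exact fun e => hwp e.symm
    have hb : 0 < ‖w‖ := norm_pos_iff.mpr hw0
    have hk := key_scalar κ1 κ2 ‖p - w‖ ‖w‖ ‖p‖ hκ1 hκ2 ha hb (norm_nonneg p) h
    have hexp : ‖p - w‖ ^ 2 = ‖p‖ ^ 2 - 2 * inner ℝ p w + ‖w‖ ^ 2 := by
      rw [norm_sub_sq_real]
    have h1 : (inner ℝ w (w - p) : ℝ) = ‖w‖ ^ 2 - inner ℝ p w := by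
      rw [inner_sub_right, real_inner_self_eq_norm_sq, real_inner_comm]
    linarith
  refine ⟨main, fun w hw => ?_⟩
  simp only [Set.mem_setOf_eq] at hw
  rw [Metric.mem_closedBall, dist_eq_norm]
  by_cases hw0 : w = 0
  · subst hw0
    rw [zero_sub, norm_neg, norm_smul]
    have h2 : ‖(1/2 : ℝ)‖ = 1/2 := by norm_num
    rw [h2]
    linarith [norm_nonneg p]
  by_cases hwp : w = p
  · subst hwp
    have : w - (1/2 : ℝ) • w = (1/2 : ℝ) • w := by module
    rw [this, norm_smul]
    have h2 : ‖(1/2 : ℝ)‖ = 1/2 := by norm_num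
    rw [h2]
    linarith [norm_nonneg w]
  · have hlt := main w hw hw0 hwp
    have h1 : (inner ℝ w (w - p) : ℝ) = ‖w‖ ^ 2 - inner ℝ p w := by
      rw [inner_sub_right, real_inner_self_eq_norm_sq, real_inner_comm]
    have hexp : ‖w - (1/2 : ℝ) • p‖ ^ 2
        = ‖w‖ ^ 2 - inner ℝ p w + (1/4) * ‖p‖ ^ 2 := by
      rw [norm_sub_sq_real, real_inner_smul_right, norm_smul, real_inner_comm]
      simp [abs_of_nonneg]
      ring
    nlinarith [norm_nonneg (w - (1/2 : ℝ) • p), norm_nonneg p]
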